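/- Let c = (c_1,…,c_n) be a vector of non-negative integers and d, ℓ ≥ 1 integers. For a monomial v ∈ S the following are equivalent: (i) v is c-bounded of degree d + ℓ and |supp(v)| > ℓ; (ii) there exist u ∈ G(I_{c,n,d}) and F ⊆ {1,…,n} with |F| = ℓ and max(F) < m(u) such that v = x_F·u and v is c-bounded. Consequently (I_{c,n,d+ℓ})_{>ℓ} = ( x_F·u : u ∈ G(I_{c,n,d}), F ⊆ {1,…,n}, |F| = ℓ, max(F) < m(u), x_F·u c-bounded ). (The right-hand ideal is the ℓ-th homological shift ideal HS_ℓ(I_{c,n,d}).) -/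

import Mathlib

open MvPolynomial

private lemma eF_apply {n : ℕ} (F : Finset (Fin n)) (j : Fin n) :
    (∑ i ∈ F, Finsupp.single i (1:ℕ)) j = if j ∈ F then 1 else 0 := by
  rw [Finsupp.finset_sum_apply]
  simp [Finsupp.single_apply]

private lemma eF_sum {n : ℕ} (F : Finset (Fin n)) :
    (∑ j, (∑ i ∈ F, Finsupp.single i (1:ℕ)) j) = F.card := by
  simp only [eF_apply]
  simp

private lemma main_iff {n : ℕ} (c : Fin n → ℕ) (d ℓ : ℕ) (hd : 1 ≤ d) (hl : 1 ≤ ℓ)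
    (v : Fin n →₀ ℕ) :
    ((∀ i, v i ≤ c i) ∧ (∑ i, v i) = d + ℓ ∧ ℓ < v.support.card) ↔
    (∃ (u : Fin n →₀ ℕ) (F : Finset (Fin n)),
      (∑ i, u i) = d ∧ (∀ i, u i ≤ c i) ∧ F.card = ℓ ∧ F.max < u.support.max ∧
      v = u + ∑ i ∈ F, Finsupp.single i 1 ∧ (∀ i, v i ≤ c i)) := by
  constructor
  · rintro ⟨hc, hs, hcard⟩
    have hne : v.support.Nonempty := Finset.card_pos.mp (by omega)
    set m := v.support.max' hne with hm
    have hmmem : m ∈ v.support := Finset.max'_mem _ _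
    have hcarde : ℓ ≤ (v.support.erase m).card := by
      rw [Finset.card_erase_of_mem hmmem]; omega
    obtain ⟨F, hFsub, hFcard⟩ := Finset.exists_subset_card_eq hcarde
    set u : Fin n →₀ ℕ := v - ∑ i ∈ F, Finsupp.single i 1 with hu
    have hua : ∀ j, u j = v j - (if j ∈ F then 1 else 0) := by
      intro j; rw [hu, Finsupp.tsub_apply, eF_apply]
    have hFpos : ∀ j ∈ F, 1 ≤ v j := by
      intro j hj
      have h' := Finset.mem_of_mem_erase (hFsub hj)
      exact Nat.one_le_iff_ne_zero.mpr (Finsupp.mem_support_iff.mp h')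
    have hveq : v = u + ∑ i ∈ F, Finsupp.single i 1 := by
      ext j
      rw [Finsupp.add_apply, hua j, eF_apply]
      by_cases hj : j ∈ F
      · have := hFpos j hj; simp only [if_pos hj]; omega
      · simp [hj]
    refine ⟨u, F, ?_, ?_, hFcard, ?_, hveq, hc⟩
    · have hsum : ∑ i, v i = (∑ i, u i) + F.card := by
        conv_lhs => rw [hveq]
        simp only [Finsupp.add_apply]
        rw [Finset.sum_add_distrib, eF_sum]
      omega
    · intro i
      calc u i ≤ v i := by rw [hua]; omega
        _ ≤ c i := hc i
    · have hmF : m ∉ F := fun h => (Finset.ne_of_mem_erase (hFsub h)) rfl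
      have hum : m ∈ u.support := by
        rw [Finsupp.mem_support_iff, hua]
        have := Finsupp.mem_support_iff.mp hmmem
        simp only [if_neg hmF]
        omega
      have h1 : (↑m : WithBot (Fin n)) ≤ u.support.max := Finset.le_max hum
      have h2 : F.max < (↑m : WithBot (Fin n)) := by
        rcases F.eq_empty_or_nonempty with rfl | hFne
        · rw [Finset.max_empty]; exact WithBot.bot_lt_coe m
        · rw [← Finset.coe_max' hFne]
          have hmem := hFsub (F.max'_mem hFne)
          have hle : F.max' hFne ≤ m :=
            Finset.le_max' v.support _ (Finset.mem_of_mem_erase hmem)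
          have hne' : F.max' hFne ≠ m := Finset.ne_of_mem_erase hmem
          exact_mod_cast lt_of_le_of_ne hle hne'
      exact lt_of_lt_of_le h2 h1
  · rintro ⟨u, F, hus, huc, hFcard, hmax, hveq, hvc⟩
    refine ⟨hvc, ?_, ?_⟩
    · rw [hveq]
      simp only [Finsupp.add_apply]
      rw [Finset.sum_add_distrib, eF_sum, hus, hFcard]
    · have hune : u.support.Nonempty := by
        by_contra h
        rw [Finset.not_nonempty_iff_eq_empty] at h
        rw [h, Finset.max_empty] at hmax
        exact not_lt_bot hmax
      set m := u.support.max' hune with hm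
      have hmu : u.support.max = ↑m := (Finset.coe_max' hune).symm
      rw [hmu] at hmax
      have hFlt : ∀ a ∈ F, a < m := by
        intro a ha
        have h' : (↑a : WithBot (Fin n)) ≤ F.max := Finset.le_max ha
        exact_mod_cast h'.trans_lt hmax
      have hmF : m ∉ F := fun h => lt_irrefl m (hFlt m h)
      have hsub : insert m F ⊆ v.support := by
        intro j hj
        rw [Finsupp.mem_support_iff, hveq, Finsupp.add_apply, eF_apply]
        rcases Finset.mem_insert.mp hj with rfl | hjF
        · have hum : u m ≠ 0 := Finsupp.mem_support_iff.mp (Finset.max'_mem _ hune)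
          split_ifs <;> omega
        · rw [if_pos hjF]; omega
      calc ℓ < (insert m F).card := by
              rw [Finset.card_insert_of_notMem hmF, hFcard]; omega
        _ ≤ v.support.card := Finset.card_le_card hsub

/-- for `d, ℓ ≥ 1`, a monomial `v` is `c`-bounded of degree `d + ℓ` with
`|supp(v)| > ℓ` iff `v = x_F · u` is `c`-bounded for some `u ∈ G(I_{c,n,d})` (i.e. a `c`-bounded
monomial of degree `d`) and some `F ⊆ {1,…,n}` with `|F| = ℓ` and `max F < m(u)`; consequently
`(I_{c,n,d+ℓ})_{>ℓ}` equals the ideal generated by all such `x_F · u`, which is `HS_ℓ(I_{c,n,d})`. -/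
theorem stmt_5 {K : Type*} [Field K] {n : ℕ} (c : Fin n → ℕ) (d ℓ : ℕ)
    (hd : 1 ≤ d) (hl : 1 ≤ ℓ) :
    (∀ v : Fin n →₀ ℕ,
      ((∀ i, v i ≤ c i) ∧ (∑ i, v i) = d + ℓ ∧ ℓ < v.support.card) ↔
      (∃ (u : Fin n →₀ ℕ) (F : Finset (Fin n)),
        (∑ i, u i) = d ∧ (∀ i, u i ≤ c i) ∧ F.card = ℓ ∧ F.max < u.support.max ∧
        v = u + ∑ i ∈ F, Finsupp.single i 1 ∧ (∀ i, v i ≤ c i))) ∧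
    (Ideal.span {p : MvPolynomial (Fin n) K | ∃ v : Fin n →₀ ℕ,
        (∀ i, v i ≤ c i) ∧ (∑ i, v i) = d + ℓ ∧ ℓ < v.support.card ∧ p = monomial v 1} =
     Ideal.span {p : MvPolynomial (Fin n) K | ∃ (u : Fin n →₀ ℕ) (F : Finset (Fin n)),
        (∑ i, u i) = d ∧ (∀ i, u i ≤ c i) ∧ F.card = ℓ ∧ F.max < u.support.max ∧
        (∀ i, (u + ∑ k ∈ F, Finsupp.single k 1 : Fin n →₀ ℕ) i ≤ c i) ∧
        p = monomial (u + ∑ k ∈ F, Finsupp.single k 1) 1}) := by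
  have h1 := main_iff c d ℓ hd hl
  refine ⟨h1, ?_⟩
  congr 1
  ext p
  constructor
  · rintro ⟨v, hvc, hvs, hvcard, rfl⟩
    obtain ⟨u, F, ha, hb, hc', hd', he', hf'⟩ := (h1 v).mp ⟨hvc, hvs, hvcard⟩
    exact ⟨u, F, ha, hb, hc', hd', he' ▸ hf', by rw [he']⟩
  · rintro ⟨u, F, ha, hb, hc', hd', he', rfl⟩
    obtain ⟨hx, hy, hz⟩ := (h1 _).mpr ⟨u, F, ha, hb, hc', hd', rfl, he'⟩
    exact ⟨_, hx, hy, hz, rfl⟩
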